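/- For the evolutionary machine PT₁ started from the empty automaton, after any finite sequence of inputs, let m₁ be the maximum length of a string accepted so far (m₁ = 0 if none). Then every string z with |z| > m₁ that has not yet been processed is accepted when first input (i.e., running PT₁ on z results in acceptance). -/

import Mathlib

/-- NFA₁: nondeterministic finite automata over Σ = {0,1} with at most one
transition per (state, letter) pair (hence transitions given by a partial function). -/
structure NFA1 where
  states : Finset ℕ
  start : ℕ
  trans : ℕ → Bool → Option ℕ
  accept : Finset ℕ

/-- Run the automaton, returning the halting/crash state together with the unread suffix. -/
def runPartial (M : NFA1) : ℕ → List Bool → ℕ × List Bool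
  | q, [] => (q, [])
  | q, a :: x =>
    match M.trans q a with
    | none => (q, a :: x)
    | some p => runPartial M p x

/-- `M` reads `x` completely and halts in an accepting state. -/
def NFA1.Accepts (M : NFA1) (x : List Bool) : Prop :=
  (runPartial M M.start x).2 = [] ∧ (runPartial M M.start x).1 ∈ M.accept

/-- `p` has a one-step transition into an accepting state. -/
def oneStepAcc (M : NFA1) (p : ℕ) : Bool :=
  ((M.trans p true).map (fun q => decide (q ∈ M.accept))).getD false ||
  ((M.trans p false).map (fun q => decide (q ∈ M.accept))).getD false

/-- Case 3 of `Evolve`: append a chain of fresh states spelling `rest` from the crash state `p`,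
with the final fresh state accepting. -/
def addChain (M : NFA1) (p : ℕ) (rest : List Bool) : NFA1 :=
  let base := (M.states.sup id) + 1
  { states := M.states ∪ (Finset.range rest.length).image (fun i => base + i)
    start := M.start
    trans := fun q a =>
      match (List.range rest.length).find? (fun i =>
          decide ((if i = 0 then p else base + (i - 1)) = q) && decide (rest[i]? = some a)) with
      | some i => some (base + i)
      | none => M.trans q a
    accept := M.accept ∪ {base + (rest.length - 1)} }

/-- The evolution operation on NFA₁ automata. -/
def Evolve (M : NFA1) (x : List Bool) : NFA1 :=
  match runPartial M M.start x with
  | (p, []) =>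
    if p ∈ M.accept then M
    else if oneStepAcc M p then M
    else { M with accept := insert p M.accept }
  | (p, rest) => addChain M p rest

/-- The empty automaton: a single state `q₀ = 0`, no transitions, no accepting states. -/
def emptyNFA : NFA1 := ⟨{0}, 0, fun _ _ => none, ∅⟩

/-- The state of PT₁ after processing the inputs `xs` in order, starting from the empty automaton. -/
def evolveAll (xs : List (List Bool)) : NFA1 := xs.foldl Evolve emptyNFA

/-- Running PT₁ on input `x` from automaton-state `M`: the automaton first evolves on `x`
and `x` is accepted iff the evolved automaton accepts it. -/
def PT1AcceptB (M : NFA1) (x : List Bool) : Bool :=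
  let M' := Evolve M x
  decide ((runPartial M' M'.start x).2 = []) && decide ((runPartial M' M'.start x).1 ∈ M'.accept)

lemma find?_range_eq_some {P : ℕ → Bool} {n k : ℕ} (hk : k < n) (hpk : P k = true)
    (hlt : ∀ i, i < k → P i = false) : (List.range n).find? P = some k := by
  induction n with
  | zero => omega
  | succ n ih =>
    rw [List.range_succ, List.find?_append]
    rcases Nat.lt_or_ge k n with h | h
    · rw [ih h]; rfl
    · have hkn : k = n := by omega
      subst hkn
      have : (List.range k).find? P = none := by
        rw [List.find?_eq_none]
        intro x hx
        simp [hlt x (List.mem_range.mp hx)]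
      rw [this]
      simp [List.find?, hpk]

lemma runPartial_closed (M : NFA1) (hcl : ∀ q a r, M.trans q a = some r → r ∈ M.states)
    (q : ℕ) (hq : q ∈ M.states) (x : List Bool) : (runPartial M q x).1 ∈ M.states := by
  induction x generalizing q with
  | nil => exact hq
  | cons a x ih =>
    simp only [runPartial]
    rcases h : M.trans q a with _ | r
    · exact hq
    · exact ih r (hcl q a r h)

lemma runPartial_append (M : NFA1) (q p : ℕ) (x y : List Bool)
    (h : runPartial M q x = (p, [])) : runPartial M q (x ++ y) = runPartial M p y := by
  induction x generalizing q with
  | nil => simp only [runPartial] at h; cases h; rfl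
  | cons a x ih =>
    simp only [runPartial, List.cons_append] at *
    rcases ht : M.trans q a with _ | r
    · rw [ht] at h; simp at h
    · rw [ht] at h; exact ih r h

lemma runPartial_decomp (M : NFA1) (q : ℕ) (z : List Bool) :
    ∃ w, z = w ++ (runPartial M q z).2 ∧ runPartial M q w = ((runPartial M q z).1, []) := by
  induction z generalizing q with
  | nil => exact ⟨[], rfl, rfl⟩
  | cons a x ih =>
    simp only [runPartial]
    rcases ht : M.trans q a with _ | r
    · exact ⟨[], rfl, rfl⟩
    · obtain ⟨w, hw1, hw2⟩ := ih r
      refine ⟨a :: w, by simpa using hw1, ?_⟩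
      simp only [runPartial, ht]
      exact hw2

lemma runPartial_crash (M : NFA1) (q p : ℕ) (a : Bool) (t : List Bool) (z : List Bool)
    (h : runPartial M q z = (p, a :: t)) : M.trans p a = none := by
  induction z generalizing q with
  | nil => simp [runPartial] at h
  | cons b x ih =>
    simp only [runPartial] at h
    rcases ht : M.trans q b with _ | r
    · rw [ht, Prod.mk.injEq, List.cons.injEq] at h
      obtain ⟨rfl, rfl, rfl⟩ := h
      exact ht
    · rw [ht] at h; exact ih r h

lemma runPartial_congr (M M' : NFA1) (h : ∀ q a r, M.trans q a = some r → M'.trans q a = some r)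
    (q p : ℕ) (x : List Bool) (hx : runPartial M q x = (p, [])) :
    runPartial M' q x = (p, []) := by
  induction x generalizing q with
  | nil => exact hx
  | cons a x ih =>
    simp only [runPartial] at *
    rcases ht : M.trans q a with _ | r
    · rw [ht] at hx; simp at hx
    · rw [ht] at hx
      rw [h q a r ht]
      exact ih r hx

/- ===== addChain lemmas ===== -/

lemma addChain_start (M : NFA1) (p : ℕ) (rest : List Bool) :
    (addChain M p rest).start = M.start := rfl

lemma addChain_trans_congr (M : NFA1) (p : ℕ) (a0 : Bool) (t : List Bool)
    (hcrash : M.trans p a0 = none)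
    (hcl : ∀ q a r, M.trans q a = some r → q ∈ M.states) :
    ∀ q a r, M.trans q a = some r → (addChain M p (a0 :: t)).trans q a = some r := by
  intro q a r h
  have hq : q ∈ M.states := hcl q a r h
  have hqle : q ≤ M.states.sup id := Finset.le_sup (f := id) hq
  simp only [addChain]
  have hnone : (List.range (a0 :: t).length).find? (fun i =>
      decide ((if i = 0 then p else (M.states.sup id + 1) + (i - 1)) = q) &&
      decide ((a0 :: t)[i]? = some a)) = none := by
    rw [List.find?_eq_none]
    intro i _
    rcases Nat.eq_zero_or_pos i with rfl | hi
    · simp only [if_pos rfl]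
      by_cases hqp : p = q
      · subst hqp
        have : (a0 :: t)[0]? = some a0 := by simp
        simp only [this]
        by_cases hab : a0 = a
        · subst hab; rw [hcrash] at h; exact absurd h (by simp)
        · simp [hab]
      · simp [hqp]
    · have : ¬ ((M.states.sup id + 1) + (i - 1) = q) := by omega
      simp [Nat.pos_iff_ne_zero.mp hi, this]
  rw [hnone]
  exact h

lemma addChain_trans_head (M : NFA1) (p : ℕ) (a0 : Bool) (t : List Bool) :
    (addChain M p (a0 :: t)).trans p a0 = some (M.states.sup id + 1) := by
  simp only [addChain]
  have : (List.range (a0 :: t).length).find? (fun i =>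
      decide ((if i = 0 then p else (M.states.sup id + 1) + (i - 1)) = p) &&
      decide ((a0 :: t)[i]? = some a0)) = some 0 := by
    apply find?_range_eq_some (by simp) _ (by omega)
    simp
  rw [this]

lemma addChain_trans_succ (M : NFA1) (p : ℕ) (rest : List Bool) (j : ℕ)
    (hj : j + 1 < rest.length) (hp : p < M.states.sup id + 1) :
    (addChain M p rest).trans (M.states.sup id + 1 + j) (rest[j+1]) =
      some (M.states.sup id + 1 + (j + 1)) := by
  simp only [addChain]
  have : (List.range rest.length).find? (fun i =>
      decide ((if i = 0 then p else (M.states.sup id + 1) + (i - 1)) = (M.states.sup id + 1 + j)) &&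
      decide (rest[i]? = some (rest[j+1]))) = some (j+1) := by
    apply find?_range_eq_some hj
    · have h1 : rest[j+1]? = some (rest[j+1]) := List.getElem?_eq_getElem hj
      simp [h1]
    · intro i hi
      rcases Nat.eq_zero_or_pos i with rfl | hipos
      · have : ¬ (p = M.states.sup id + 1 + j) := by omega
        simp [this]
      · have : ¬ (M.states.sup id + 1 + (i - 1) = M.states.sup id + 1 + j) := by omega
        simp [Nat.pos_iff_ne_zero.mp hipos, this, show i - 1 ≠ j by omega]
  rw [this]

lemma addChain_run_from (M : NFA1) (p : ℕ) (rest : List Bool)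
    (hp : p < M.states.sup id + 1) :
    ∀ n j, rest.length = j + 1 + n →
      runPartial (addChain M p rest) (M.states.sup id + 1 + j) (rest.drop (j+1))
        = (M.states.sup id + 1 + (rest.length - 1), []) := by
  intro n
  induction n with
  | zero =>
    intro j hj
    rw [List.drop_eq_nil_of_le (by omega)]
    simp only [runPartial]
    congr 1
    omega
  | succ n ih =>
    intro j hj
    have hjlt : j + 1 < rest.length := by omega
    rw [List.drop_eq_getElem_cons hjlt]
    simp only [runPartial, addChain_trans_succ M p rest j hjlt hp]
    have := ih (j+1) (by omega)
    rw [show j + 1 + 1 = j + 2 by omega] at this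
    exact this

lemma addChain_run (M : NFA1) (p : ℕ) (a0 : Bool) (t : List Bool)
    (hp : p < M.states.sup id + 1) :
    runPartial (addChain M p (a0 :: t)) p (a0 :: t)
      = (M.states.sup id + 1 + ((a0 :: t).length - 1), []) := by
  simp only [runPartial, addChain_trans_head M p a0 t]
  have := addChain_run_from M p (a0 :: t) hp t.length 0 (by simp; omega)
  simpa using this

/- ===== the invariant ===== -/

def InvM (M : NFA1) : Prop :=
  M.start = 0 ∧ M.start ∈ M.states ∧
    ∀ q a r, M.trans q a = some r → q ∈ M.states ∧ r ∈ M.states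

lemma inv_addChain (M : NFA1) (p : ℕ) (rest : List Bool) (hInv : InvM M)
    (hp : p ∈ M.states) : InvM (addChain M p rest) := by
  obtain ⟨h0, hs, hcl⟩ := hInv
  refine ⟨h0, Finset.mem_union_left _ hs, ?_⟩
  intro q a r h
  simp only [addChain] at h ⊢
  rcases hf : (List.range rest.length).find? (fun i =>
      decide ((if i = 0 then p else (M.states.sup id + 1) + (i - 1)) = q) &&
      decide (rest[i]? = some a)) with _ | i
  · rw [hf] at h
    obtain ⟨hq, hr⟩ := hcl q a r h
    exact ⟨Finset.mem_union_left _ hq, Finset.mem_union_left _ hr⟩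
  · rw [hf] at h
    have hilt : i < rest.length := List.mem_range.mp (List.mem_of_find?_eq_some hf)
    have hpred := List.find?_some hf
    simp only [Bool.and_eq_true, decide_eq_true_eq] at hpred
    obtain ⟨hq, -⟩ := hpred
    injection h with h'
    constructor
    · rcases Nat.eq_zero_or_pos i with rfl | hipos
      · rw [if_pos rfl] at hq; exact hq ▸ Finset.mem_union_left _ hp
      · rw [if_neg (by omega)] at hq
        exact hq ▸ Finset.mem_union_right _
          (Finset.mem_image.mpr ⟨i - 1, Finset.mem_range.mpr (by omega), rfl⟩)
    · exact h' ▸ Finset.mem_union_right _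
        (Finset.mem_image.mpr ⟨i, Finset.mem_range.mpr hilt, rfl⟩)

lemma runPartial_eq_of_trans (M M' : NFA1) (h : M.trans = M'.trans) (q : ℕ) (x : List Bool) :
    runPartial M q x = runPartial M' q x := by
  induction x generalizing q with
  | nil => rfl
  | cons a x ih =>
    simp only [runPartial, ← h]
    rcases M.trans q a with _ | r
    · rfl
    · exact ih r

lemma inv_evolve (M : NFA1) (x : List Bool) (hInv : InvM M) : InvM (Evolve M x) := by
  obtain ⟨h0, hs, hcl⟩ := hInv
  have hpmem : (runPartial M M.start x).1 ∈ M.states :=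
    runPartial_closed M (fun q a r h => (hcl q a r h).2) M.start hs x
  rcases hr : runPartial M M.start x with ⟨p, rest⟩
  rw [hr] at hpmem
  unfold Evolve
  rw [hr]
  rcases rest with _ | ⟨a, t⟩
  · dsimp only
    split_ifs with h1 h2
    · exact ⟨h0, hs, hcl⟩
    · exact ⟨h0, hs, hcl⟩
    · exact ⟨h0, hs, hcl⟩
  · exact inv_addChain M p (a :: t) ⟨h0, hs, hcl⟩ hpmem

lemma inv_evolveAll (xs : List (List Bool)) : InvM (evolveAll xs) := by
  have : ∀ M, InvM M → InvM (xs.foldl Evolve M) := by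
    induction xs with
    | nil => intro M h; exact h
    | cons x xs ih => intro M h; exact ih _ (inv_evolve M x h)
  exact this emptyNFA ⟨rfl, by simp [emptyNFA], by intro q a r h; simp [emptyNFA] at h⟩

/-- for PT₁ started from the empty automaton, after any finite sequence of
inputs xs, every not-yet-processed string z longer than every string accepted so far
(in particular longer than m₁, hence nonempty) is accepted when first input. -/
theorem long_unprocessed_strings_accepted (xs : List (List Bool)) (z : List Bool)
    (hlong : ∀ w, (evolveAll xs).Accepts w → w.length < z.length)
    (hnew : z ∉ xs) (hz : 0 < z.length) :
    PT1AcceptB (evolveAll xs) z = true := by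

  set M := evolveAll xs with hM
  obtain ⟨h0, hs, hcl⟩ := inv_evolveAll xs
  have hpmem : (runPartial M M.start z).1 ∈ M.states :=
    runPartial_closed M (fun q a r h => (hcl q a r h).2) M.start hs z
  rcases hr : runPartial M M.start z with ⟨p, rest⟩
  rw [hr] at hpmem
  rcases rest with _ | ⟨a, t⟩
  · -- run reads all of z
    by_cases hacc : p ∈ M.accept
    · have : M.Accepts z := ⟨by rw [hr], by rw [hr]; exact hacc⟩
      exact absurd (hlong z this) (lt_irrefl _)
    · by_cases hos : oneStepAcc M p = true
      · -- one step from accepting: z ++ [b] is accepted, contradiction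
        obtain ⟨b, q, htr, hqacc⟩ : ∃ b q, M.trans p b = some q ∧ q ∈ M.accept := by
          unfold oneStepAcc at hos
          rcases ht : M.trans p true with _ | q1 <;> rcases hf : M.trans p false with _ | q2 <;>
            rw [ht, hf] at hos <;> simp at hos
          · exact ⟨false, q2, hf, by simpa using hos⟩
          · exact ⟨true, q1, ht, by simpa using hos⟩
          · rcases hos with h | h
            · exact ⟨true, q1, ht, by simpa using h⟩
            · exact ⟨false, q2, hf, by simpa using h⟩
        have hrun : runPartial M M.start (z ++ [b]) = (q, []) := by
          rw [runPartial_append M M.start p z [b] hr]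
          simp [runPartial, htr]
        have : M.Accepts (z ++ [b]) := ⟨by rw [hrun], by rw [hrun]; exact hqacc⟩
        have := hlong _ this
        simp at this
      · -- third subcase: p becomes accepting
        have hev : Evolve M z = { M with accept := insert p M.accept } := by
          unfold Evolve; rw [hr]; simp [hacc, hos]
        unfold PT1AcceptB
        rw [hev]
        have hrun : runPartial { M with accept := insert p M.accept } M.start z = (p, []) := by
          rw [runPartial_eq_of_trans { M with accept := insert p M.accept } M rfl]; exact hr
        simp only [hrun]
        simp
  · -- run crashes: chain is added and z gets accepted
    have hcrash : M.trans p a = none := runPartial_crash M M.start p a t z hr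
    have hple : p < M.states.sup id + 1 :=
      Nat.lt_succ_of_le (Finset.le_sup (f := id) hpmem)
    obtain ⟨w, hw1, hw2⟩ := runPartial_decomp M M.start z
    rw [hr] at hw1 hw2
    have hev : Evolve M z = addChain M p (a :: t) := by
      unfold Evolve; rw [hr]
    have hcong := addChain_trans_congr M p a t hcrash (fun q b r h => (hcl q b r h).1)
    have hrunw : runPartial (addChain M p (a :: t)) M.start w = (p, []) :=
      runPartial_congr M _ hcong M.start p w hw2
    have hrun : runPartial (addChain M p (a :: t)) M.start z
        = (M.states.sup id + 1 + ((a :: t).length - 1), []) := by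
      rw [hw1, runPartial_append _ _ _ _ _ hrunw]
      exact addChain_run M p a t hple
    unfold PT1AcceptB
    dsimp only
    rw [hev, addChain_start, hrun]
    simp [addChain]
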